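/- The origin 0_{n+1} is not in the interior of the epigraphical set E(Ā, b̄, B), provided the nominal feasible set {x : Āx + b̄ ∈ −K} is nonempty. -/

import Mathlib

open Finset Pointwise

noncomputable def enorm2 {k : ℕ} (v : Fin k → ℝ) : ℝ := Real.sqrt (∑ i, v i ^ 2)

def coneHull {k : ℕ} (X : Set (Fin k → ℝ)) : Set (Fin k → ℝ) :=
  {y | y = 0 ∨ ∃ t : ℝ, 0 ≤ t ∧ ∃ c ∈ convexHull ℝ X, y = t • c}

def dualCone {m : ℕ} (K : Set (Fin m → ℝ)) : Set (Fin m → ℝ) :=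
  {a | ∀ x ∈ K, 0 ≤ ∑ i, a i * x i}

def Feas {m n : ℕ} (K : Set (Fin m → ℝ)) (Abar : Fin m → Fin n → ℝ) (bbar : Fin m → ℝ)
    (r : Fin m → ℝ) : Set (Fin n → ℝ) :=
  {x | ∀ (a : Fin m → Fin n → ℝ) (b : Fin m → ℝ),
      (∀ i, enorm2 (Fin.snoc (a i - Abar i) (b i - bbar i)) ≤ r i) →
      (fun i => (∑ j, a i j * x j) + b i) ∈ -K}

def Adm {m n : ℕ} (K : Set (Fin m → ℝ)) (Abar : Fin m → Fin n → ℝ) (bbar : Fin m → ℝ) :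
    Set (Fin m → ℝ) :=
  {r | (∀ i, 0 ≤ r i) ∧ (Feas K Abar bbar r).Nonempty}

noncomputable def rrf {m n : ℕ} (K : Set (Fin m → ℝ)) (Abar : Fin m → Fin n → ℝ)
    (bbar : Fin m → ℝ) : ℝ :=
  sSup {α : ℝ | 0 ≤ α ∧ (fun _ => α) ∈ Adm K Abar bbar}

def Epi {m n : ℕ} (Abar : Fin m → Fin n → ℝ) (bbar : Fin m → ℝ) (B : Set (Fin m → ℝ)) :
    Set (Fin (n + 1) → ℝ) :=
  {y | ∃ l ∈ B, ∃ w : ℝ, 0 ≤ w ∧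
    y = Fin.snoc (fun j => ∑ i, l i * Abar i j) (-(∑ i, l i * bbar i) + w)}

noncomputable def edist0 {m n : ℕ} (Abar : Fin m → Fin n → ℝ) (bbar : Fin m → ℝ)
    (B : Set (Fin m → ℝ)) : ℝ :=
  sInf {t : ℝ | ∃ y ∈ Epi Abar bbar B, t = enorm2 y}

def IsCompactBase {m : ℕ} (C B : Set (Fin m → ℝ)) : Prop :=
  IsCompact B ∧ Convex ℝ B ∧ B ⊆ C ∧ (0 : Fin m → ℝ) ∉ B ∧
    C = {y | ∃ t : ℝ, 0 ≤ t ∧ ∃ b ∈ B, y = t • b}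

def IsClosedConvexCone {m : ℕ} (K : Set (Fin m → ℝ)) : Prop :=
  IsClosed K ∧ Convex ℝ K ∧ ∀ t : ℝ, 0 ≤ t → ∀ x ∈ K, t • x ∈ K

noncomputable def c1 {m : ℕ} (n : ℕ) (B : Set (Fin m → ℝ)) : ℝ :=
  (sSup {t : ℝ | ∃ l ∈ B, ∃ u : Fin m → (Fin (n + 1) → ℝ),
    (∀ i, enorm2 (u i) ≤ 1) ∧ t = enorm2 (∑ i, l i • u i)})⁻¹

noncomputable def c2 {m : ℕ} (B : Set (Fin m → ℝ)) : ℝ :=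
  (sInf {t : ℝ | ∃ l ∈ B, t = ∑ i, |l i|})⁻¹
/-- the origin is not in the interior of the epigraphical set when the
nominal problem is feasible. -/
theorem statement11 {m n : ℕ} (K : Set (Fin m → ℝ)) (hclosed : IsClosed K) (hconv : Convex ℝ K)
    (hcone : ∀ t : ℝ, 0 ≤ t → ∀ x ∈ K, t • x ∈ K)
    (hpointed : K ∩ (-K) = {0}) (hint : (interior K).Nonempty)
    (B : Set (Fin m → ℝ)) (hB : IsCompactBase (dualCone K) B)
    (Abar : Fin m → Fin n → ℝ) (bbar : Fin m → ℝ)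
    (hfeas : ∃ x : Fin n → ℝ, (fun i => (∑ j, Abar i j * x j) + bbar i) ∈ -K) :
    (0 : Fin (n + 1) → ℝ) ∉ interior (Epi Abar bbar B) := by
  intro h
  obtain ⟨ε, hε, hsub⟩ := Metric.isOpen_iff.mp isOpen_interior 0 h
  set y : Fin (n + 1) → ℝ := Fin.snoc 0 (-(ε / 2)) with hy
  have hymem : y ∈ Epi Abar bbar B := by
    apply interior_subset
    apply hsub
    rw [Metric.mem_ball, dist_pi_lt_iff hε]
    intro i
    refine Fin.lastCases ?_ ?_ i
    · simp only [hy, Fin.snoc_last, Pi.zero_apply, Real.dist_eq]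
      rw [sub_zero, abs_neg, abs_of_pos (by linarith)]
      linarith
    · intro j
      simp [hy, Fin.snoc_castSucc, Real.dist_eq, hε]
  obtain ⟨l, hlB, w, hw, heq⟩ := hymem
  have hA : ∀ j, (∑ i, l i * Abar i j) = 0 := by
    intro j
    have h1 := congrFun heq (Fin.castSucc j)
    simpa [hy, Fin.snoc_castSucc] using h1.symm
  have hlast : -(∑ i, l i * bbar i) + w = -(ε / 2) := by
    have h1 := congrFun heq (Fin.last n)
    simpa [hy, Fin.snoc_last] using h1.symm
  obtain ⟨x, hx⟩ := hfeas
  have hdual : l ∈ dualCone K := hB.2.2.1 hlB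
  have hxK : -(fun i => (∑ j, Abar i j * x j) + bbar i) ∈ K := Set.mem_neg.mp hx
  have h0 := hdual _ hxK
  simp only [Pi.neg_apply, mul_neg, mul_add, Finset.sum_add_distrib,
    Finset.sum_neg_distrib] at h0
  have hswap : ∑ i, l i * (∑ j, Abar i j * x j) = 0 := by
    have : ∑ i, l i * (∑ j, Abar i j * x j) = ∑ j, (∑ i, l i * Abar i j) * x j := by
      simp_rw [Finset.mul_sum, Finset.sum_mul]
      rw [Finset.sum_comm]
      simp [mul_assoc]
    rw [this]
    simp [hA]
  rw [hswap] at h0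
  simp only [neg_zero, zero_add, le_neg] at h0 ⊢
  linarith
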